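/- Let μ be a Borel probability measure on ℝ^d such that for each sufficiently large m and each Borel set B with μ(B) ≥ m^{−2}, there exists a Borel probability measure ν supported on B with H(ν, D_m) ≥ αm, where D_m is the partition into dyadic cubes of side 2^{−m} and H denotes Shannon entropy. Then every Borel set A with μ(A) > 0 has Hausdorff dimension at least α. -/

import Mathlib

open MeasureTheory ENNReal

/-- The half-open dyadic cube of side `2^{-j}` in `ℝ^d` indexed by `k : Fin d → ℤ`. -/
def dyCube (d j : ℕ) (k : Fin d → ℤ) : Set (EuclideanSpace ℝ (Fin d)) :=
  {x | ∀ i, (k i : ℝ) / 2 ^ j ≤ x i ∧ x i < ((k i : ℝ) + 1) / 2 ^ j}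

/-- The base-2 Shannon entropy of `ν` with respect to the partition into dyadic cubes of
side `2^{-m}`. -/
noncomputable def dyEntropy (d m : ℕ) (ν : Measure (EuclideanSpace ℝ (Fin d))) : ℝ :=
  ∑' k : Fin d → ℤ,
    -((ν (dyCube d m k)).toReal * Real.logb 2 (ν (dyCube d m k)).toReal)

/-! ### Auxiliary definitions and lemmas -/

noncomputable def dyIdx (d m : ℕ) (x : EuclideanSpace ℝ (Fin d)) : Fin d → ℤ :=
  fun i => ⌊2 ^ m * x i⌋

lemma mem_dyCube_iff {d m : ℕ} {k : Fin d → ℤ} {x : EuclideanSpace ℝ (Fin d)} :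
    x ∈ dyCube d m k ↔ dyIdx d m x = k := by
  constructor
  · intro hx
    funext i
    obtain ⟨h1, h2⟩ := hx i
    have hp : (0:ℝ) < 2 ^ m := by positivity
    have h1' : (k i : ℝ) ≤ 2 ^ m * x i := by
      rw [div_le_iff₀ hp] at h1; linarith [h1]
    have h2' : 2 ^ m * x i < (k i : ℝ) + 1 := by
      rw [lt_div_iff₀ hp] at h2; linarith [h2]
    exact Int.floor_eq_iff.mpr ⟨h1', h2'⟩
  · rintro rfl i
    have hp : (0:ℝ) < 2 ^ m := by positivity
    constructor
    · rw [div_le_iff₀ hp]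
      have := Int.floor_le (2 ^ m * x i)
      simp only [dyIdx]
      linarith [mul_comm ((2:ℝ) ^ m) (x i)]
    · rw [lt_div_iff₀ hp]
      have := Int.lt_floor_add_one (2 ^ m * x i)
      simp only [dyIdx]
      linarith [mul_comm ((2:ℝ) ^ m) (x i)]

lemma dyCube_eq_preimage (d m : ℕ) (k : Fin d → ℤ) :
    dyCube d m k = dyIdx d m ⁻¹' {k} := by
  ext x; simp [mem_dyCube_iff]

lemma measurable_dyIdx (d m : ℕ) : Measurable (dyIdx d m) := by
  apply measurable_pi_lambda
  intro i
  exact Measurable.comp Int.measurable_floor ((measurable_const.mul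
    ((continuous_apply i).comp
      (PiLp.continuousLinearEquiv 2 ℝ (fun _ : Fin d => ℝ)).continuous).measurable))

lemma measurableSet_dyCube (d m : ℕ) (k : Fin d → ℤ) : MeasurableSet (dyCube d m k) := by
  rw [dyCube_eq_preimage]
  exact measurable_dyIdx d m (measurableSet_singleton k)

lemma tsum_measure_dyCube (d m : ℕ) (ν : Measure (EuclideanSpace ℝ (Fin d)))
    [IsProbabilityMeasure ν] :
    ∑' k : Fin d → ℤ, ν (dyCube d m k) = 1 := by
  have hdisj : Pairwise (Function.onFun Disjoint fun k => dyCube d m k) := by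
    intro k k' hkk'
    simp only [Function.onFun, Set.disjoint_left]
    rintro x hx hx'
    rw [mem_dyCube_iff] at hx hx'
    exact hkk' (hx.symm.trans hx')
  rw [← measure_iUnion hdisj (measurableSet_dyCube d m)]
  have : (⋃ k : Fin d → ℤ, dyCube d m k) = Set.univ := by
    ext x; simp only [Set.mem_iUnion, Set.mem_univ, iff_true]
    exact ⟨dyIdx d m x, mem_dyCube_iff.mpr rfl⟩
  rw [this, measure_univ]

lemma sum_negMulLog_le_log_card {ι : Type*} (K : Finset ι) (p : ι → ℝ)
    (h0 : ∀ k ∈ K, 0 ≤ p k) (h1 : ∑ k ∈ K, p k = 1) :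
    ∑ k ∈ K, Real.negMulLog (p k) ≤ Real.log K.card := by
  have hKne : K.Nonempty := by
    by_contra hK
    rw [Finset.not_nonempty_iff_eq_empty] at hK
    simp [hK] at h1
  have hN : (0:ℝ) < K.card := by exact_mod_cast Finset.card_pos.mpr hKne
  have hjen := Real.concaveOn_negMulLog.le_map_sum (t := K) (w := fun _ => (K.card : ℝ)⁻¹)
    (p := p) (fun i _ => by positivity)
    (by rw [Finset.sum_const, nsmul_eq_mul]; exact mul_inv_cancel₀ hN.ne')
    (fun i hi => Set.mem_Ici.mpr (h0 i hi))
  rw [← Finset.smul_sum] at hjen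
  have hsum : (∑ i ∈ K, (K.card:ℝ)⁻¹ • p i) = (K.card:ℝ)⁻¹ := by
    rw [← Finset.smul_sum, h1, smul_eq_mul, mul_one]
  rw [hsum] at hjen
  have hval : Real.negMulLog ((K.card:ℝ)⁻¹) = (K.card:ℝ)⁻¹ * Real.log K.card := by
    simp [Real.negMulLog, Real.log_inv]
  rw [hval, smul_eq_mul] at hjen
  have := (mul_le_mul_iff_right₀ (show (0:ℝ) < (K.card:ℝ)⁻¹ by positivity)).mp hjen
  linarith

lemma dyEntropy_le_logb_card (d m : ℕ) (ν : Measure (EuclideanSpace ℝ (Fin d)))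
    [IsProbabilityMeasure ν] (K : Finset (Fin d → ℤ))
    (hK : ∀ k, k ∉ K → ν (dyCube d m k) = 0) :
    dyEntropy d m ν ≤ Real.logb 2 K.card := by
  set p : (Fin d → ℤ) → ℝ := fun k => (ν (dyCube d m k)).toReal with hp
  have hterm0 : ∀ k ∉ K,
      -((ν (dyCube d m k)).toReal * Real.logb 2 (ν (dyCube d m k)).toReal) = 0 := by
    intro k hk; rw [hK k hk]; simp
  have hsum1 : ∑ k ∈ K, p k = 1 := by
    have h1 : (∑' k : Fin d → ℤ, ν (dyCube d m k)).toReal = 1 := by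
      rw [tsum_measure_dyCube]; simp
    rw [ENNReal.tsum_toReal_eq (fun k => measure_ne_top ν _)] at h1
    rw [← h1]
    exact (tsum_eq_sum (fun k hk => by simp [hp, hK k hk])).symm
  have hE : dyEntropy d m ν = ∑ k ∈ K, -(p k * Real.logb 2 (p k)) :=
    tsum_eq_sum hterm0
  rw [hE]
  have heq : ∀ k, -(p k * Real.logb 2 (p k)) = Real.negMulLog (p k) / Real.log 2 := by
    intro k
    simp only [Real.negMulLog, Real.logb]
    field_simp
  calc ∑ k ∈ K, -(p k * Real.logb 2 (p k))
      = (∑ k ∈ K, Real.negMulLog (p k)) / Real.log 2 := by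
        rw [Finset.sum_div]; exact Finset.sum_congr rfl fun k _ => heq k
    _ ≤ Real.log K.card / Real.log 2 := by
        have h2 : (0:ℝ) < Real.log 2 := Real.log_pos (by norm_num)
        exact (div_le_div_iff_of_pos_right h2).mpr
          (sum_negMulLog_le_log_card K p (fun k _ => ENNReal.toReal_nonneg) hsum1)
    _ = Real.logb 2 K.card := by rw [Real.logb]

lemma abs_coord_le_dist {d : ℕ} (x y : EuclideanSpace ℝ (Fin d)) (i : Fin d) :
    |x i - y i| ≤ dist x y := by
  rw [EuclideanSpace.dist_eq]
  have h1 : |x i - y i| = Real.sqrt (dist (x i) (y i) ^ 2) := by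
    rw [Real.sqrt_sq_eq_abs, Real.dist_eq, abs_abs]
  rw [h1]
  apply Real.sqrt_le_sqrt
  exact Finset.single_le_sum (f := fun j => dist (x j) (y j) ^ 2)
    (fun j _ => by positivity) (Finset.mem_univ i)

noncomputable def nbrFinset (d m : ℕ) (y : EuclideanSpace ℝ (Fin d)) : Finset (Fin d → ℤ) :=
  Fintype.piFinset fun i => {⌊2 ^ m * y i⌋ - 1, ⌊2 ^ m * y i⌋, ⌊2 ^ m * y i⌋ + 1}

lemma card_nbrFinset_le (d m : ℕ) (y : EuclideanSpace ℝ (Fin d)) :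
    (nbrFinset d m y).card ≤ 3 ^ d := by
  rw [nbrFinset, Fintype.card_piFinset]
  calc ∏ i : Fin d, ({⌊2 ^ m * y i⌋ - 1, ⌊2 ^ m * y i⌋, ⌊2 ^ m * y i⌋ + 1} : Finset ℤ).card
      ≤ ∏ _i : Fin d, 3 := by
        apply Finset.prod_le_prod (fun _ _ => Nat.zero_le _)
        intro i _
        calc ({⌊2 ^ m * y i⌋ - 1, ⌊2 ^ m * y i⌋, ⌊2 ^ m * y i⌋ + 1} : Finset ℤ).card
            ≤ ({⌊2 ^ m * y i⌋, ⌊2 ^ m * y i⌋ + 1} : Finset ℤ).card + 1 :=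
              Finset.card_insert_le _ _
          _ ≤ 3 := by
              have := Finset.card_insert_le (⌊2 ^ m * y i⌋) ({⌊2 ^ m * y i⌋ + 1} : Finset ℤ)
              simp only [Finset.card_singleton] at this
              omega
    _ = 3 ^ d := by simp [Finset.prod_const]

lemma subset_biUnion_nbr {d : ℕ} (m : ℕ) (U : Set (EuclideanSpace ℝ (Fin d)))
    (hU : EMetric.diam U ≤ ENNReal.ofReal ((2:ℝ) ^ m)⁻¹) {y : EuclideanSpace ℝ (Fin d)}
    (hy : y ∈ U) : U ⊆ ⋃ k ∈ nbrFinset d m y, dyCube d m k := by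
  intro z hz
  have hdist : dist z y ≤ ((2:ℝ) ^ m)⁻¹ := by
    have h1 : edist z y ≤ EMetric.diam U := EMetric.edist_le_diam_of_mem hz hy
    have h2 := h1.trans hU
    rw [edist_dist] at h2
    exact (ENNReal.ofReal_le_ofReal_iff (by positivity)).mp h2
  refine Set.mem_biUnion ?_ (mem_dyCube_iff.mpr (rfl : dyIdx d m z = _))
  refine (Fintype.mem_piFinset (f := dyIdx d m z)).mpr ?_
  intro i
  have hco : |z i - y i| ≤ ((2:ℝ) ^ m)⁻¹ := (abs_coord_le_dist z y i).trans hdist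
  have hp : (0:ℝ) < 2 ^ m := by positivity
  have habs : |2 ^ m * z i - 2 ^ m * y i| ≤ 1 := by
    rw [← mul_sub, abs_mul, abs_of_pos hp]
    calc 2 ^ m * |z i - y i| ≤ 2 ^ m * ((2:ℝ) ^ m)⁻¹ :=
          mul_le_mul_of_nonneg_left hco hp.le
      _ = 1 := mul_inv_cancel₀ hp.ne'
  have h1 : (⌊2 ^ m * z i⌋ : ℤ) ≤ ⌊2 ^ m * y i⌋ + 1 := by
    have h : 2 ^ m * z i ≤ 2 ^ m * y i + 1 := by
      have := abs_le.mp habs; linarith [this.2]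
    calc (⌊2 ^ m * z i⌋ : ℤ) ≤ ⌊2 ^ m * y i + 1⌋ := Int.floor_le_floor h
      _ = ⌊2 ^ m * y i⌋ + 1 := by rw [Int.floor_add_one]
  have h2 : (⌊2 ^ m * y i⌋ : ℤ) - 1 ≤ ⌊2 ^ m * z i⌋ := by
    have h : 2 ^ m * y i ≤ 2 ^ m * z i + 1 := by
      have := abs_le.mp habs; linarith [this.1]
    have := Int.floor_le_floor h
    rw [Int.floor_add_one] at this
    omega
  show dyIdx d m z i ∈ _
  simp only [dyIdx, Finset.mem_insert, Finset.mem_singleton]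
  omega

lemma card_mul_le_of_le_tsum {g : ℕ → ℝ≥0∞} {c ε : ℝ≥0∞}
    (hsum : ∑' n, g n ≤ ε) (G : Finset ℕ) (hG : ∀ n ∈ G, c ≤ g n) :
    (G.card : ℝ≥0∞) * c ≤ ε := by
  calc (G.card : ℝ≥0∞) * c = ∑ _n ∈ G, c := by rw [Finset.sum_const, nsmul_eq_mul]
    _ ≤ ∑ n ∈ G, g n := Finset.sum_le_sum hG
    _ ≤ ∑' n, g n := ENNReal.sum_le_tsum G
    _ ≤ ε := hsum

lemma finite_of_le_tsum {g : ℕ → ℝ≥0∞} {c ε : ℝ≥0∞} (hc0 : c ≠ 0) (hc1 : c ≠ ∞)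
    (hε : ε ≠ ∞) (hsum : ∑' n, g n ≤ ε) : {n | c ≤ g n}.Finite := by
  by_contra hinf
  rw [← Set.Infinite] at hinf
  obtain ⟨N, hN⟩ := ENNReal.exists_nat_gt (show ε / c ≠ ∞ from
    (ENNReal.div_lt_top hε hc0).ne)
  obtain ⟨G, hGsub, hGcard⟩ := hinf.exists_subset_card_eq N
  have h1 : (G.card : ℝ≥0∞) * c ≤ ε :=
    card_mul_le_of_le_tsum hsum G (fun n hn => hGsub hn)
  rw [hGcard] at h1
  have h2 : ε < N * c := (ENNReal.div_lt_iff (Or.inl hc0) (Or.inl hc1)).mp hN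
  exact absurd h1 (not_le.mpr h2)

/-- The scale-`m` threshold `2^{-m}` as an extended nonnegative real. -/
noncomputable def qq (m : ℕ) : ℝ≥0∞ := ENNReal.ofReal ((2 ^ m : ℝ))⁻¹

lemma qq_pos (m : ℕ) : 0 < qq m := by
  rw [qq]; exact ENNReal.ofReal_pos.mpr (by positivity)

lemma qq_ne_top (m : ℕ) : qq m ≠ ∞ := ENNReal.ofReal_ne_top

lemma qq_antitone {m m' : ℕ} (h : m ≤ m') : qq m' ≤ qq m := by
  rw [qq, qq]
  apply ENNReal.ofReal_le_ofReal
  apply inv_anti₀ (by positivity)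
  exact pow_le_pow_right₀ (by norm_num) h

lemma exists_qq_lt {a : ℝ≥0∞} (ha : a ≠ 0) : ∃ j, qq (j + 1) < a := by
  rcases eq_or_ne a ∞ with rfl | ha'
  · exact ⟨0, (qq_ne_top 1).lt_top⟩
  · have h0 : 0 < a.toReal := ENNReal.toReal_pos ha ha'
    obtain ⟨n, hn⟩ := exists_pow_lt_of_lt_one h0 (show (1/2 : ℝ) < 1 by norm_num)
    refine ⟨n, ?_⟩
    have h1 : ((2 ^ (n+1) : ℝ))⁻¹ < a.toReal := by
      apply lt_of_le_of_lt _ hn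
      rw [one_div, ← inv_pow]
      apply pow_le_pow_of_le_one (by positivity) (by norm_num) (Nat.le_succ n)
    calc qq (n+1) < ENNReal.ofReal a.toReal := by
          rw [qq]; exact ENNReal.ofReal_lt_ofReal_iff_of_nonneg (by positivity) |>.mpr h1
      _ = a := ENNReal.ofReal_toReal ha'

/-- If a Borel probability measure `μ` on `ℝ^d` is such that for every
sufficiently large `m` and every Borel set `B` with `μ(B) ≥ m^{-2}` there is a probability
measure `ν` supported on `B` with `H(ν, D_m) ≥ α m`, then every Borel set `A` with
`μ(A) > 0` has Hausdorff dimension at least `α`. -/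
theorem entropy_to_hausdorff_dim (d : ℕ) (α : ℝ)
    (μ : Measure (EuclideanSpace ℝ (Fin d))) [IsProbabilityMeasure μ]
    (h : ∃ m₀ : ℕ, ∀ m : ℕ, m₀ ≤ m → ∀ B : Set (EuclideanSpace ℝ (Fin d)),
      MeasurableSet B → ENNReal.ofReal (1 / (m : ℝ) ^ 2) ≤ μ B →
      ∃ ν : Measure (EuclideanSpace ℝ (Fin d)), IsProbabilityMeasure ν ∧ ν Bᶜ = 0 ∧
        α * m ≤ dyEntropy d m ν) :
    ∀ A : Set (EuclideanSpace ℝ (Fin d)), MeasurableSet A → 0 < μ A →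
      ENNReal.ofReal α ≤ dimH A := by
  classical
  intro A hAmeas hμA
  obtain ⟨m₀, hm₀⟩ := h
  by_contra hcon
  push_neg at hcon
  obtain ⟨s, hs1, hs2⟩ := ENNReal.lt_iff_exists_nnreal_btwn.mp hcon
  have hμH := hausdorffMeasure_of_dimH_lt hs1
  set sr : ℝ := (s : ℝ) with hsr
  have hs0 : 0 < sr := by
    rcases eq_or_lt_of_le (zero_le : (0:NNReal) ≤ s) with hz | hz
    · exfalso; rw [← hz] at hs1; simp at hs1
    · exact_mod_cast hz
  have hsα : sr < α := by
    by_contra hle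
    push_neg at hle
    have : ENNReal.ofReal α ≤ (s : ℝ≥0∞) := by
      rw [← ENNReal.ofReal_coe_nnreal]
      exact ENNReal.ofReal_le_ofReal hle
    exact absurd hs2 (not_lt.mpr this)
  have hα0 : 0 < α := hs0.trans hsα
  -- the tail series
  set G : ℕ → ℝ≥0∞ := fun j => ENNReal.ofReal (1 / (j : ℝ) ^ 2) with hG
  have hGsummable : Summable (fun j : ℕ => 1 / (j : ℝ) ^ 2) :=
    Real.summable_one_div_nat_pow.mpr one_lt_two
  have hGfin : ∑' j, G j ≠ ∞ := by
    rw [hG, ← ENNReal.ofReal_tsum_of_nonneg (fun j => by positivity) hGsummable]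
    exact ENNReal.ofReal_ne_top
  have htail := ENNReal.tendsto_sum_nat_add G hGfin
  have htail2 : ∀ᶠ i in Filter.atTop, ∑' k, G (k + i) < μ A :=
    htail.eventually_lt_const hμA
  obtain ⟨M₃, hM₃⟩ := htail2.exists_forall_of_atTop
  -- choose M
  obtain ⟨M₁, hM₁⟩ := exists_nat_ge (1 / sr)
  obtain ⟨M₂, hM₂⟩ := exists_nat_ge ((2 * d + 1) / (α - sr))
  set M : ℕ := max (max (max m₀ 1) (max M₁ M₂)) M₃ with hM
  have hMm₀ : m₀ ≤ M := le_trans (le_trans (le_max_left _ _) (le_max_left _ _)) (le_max_left _ _)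
  have hM1 : 1 ≤ M := le_trans (le_trans (le_max_right _ _) (le_max_left _ _)) (le_max_left _ _)
  have hMM₁ : M₁ ≤ M := le_trans (le_trans (le_max_left _ _) (le_max_right _ _)) (le_max_left _ _)
  have hMM₂ : M₂ ≤ M := le_trans (le_trans (le_max_right _ _) (le_max_right _ _)) (le_max_left _ _)
  have hMM₃ : M₃ ≤ M := le_max_right _ _
  -- consequences of the choice of M, for all m ≥ M
  have hsm1 : ∀ m : ℕ, M ≤ m → 1 ≤ sr * m := by
    intro m hm
    have h1 : (M₁ : ℝ) ≤ m := by exact_mod_cast hMM₁.trans hm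
    have h2 : 1 / sr ≤ (m : ℝ) := hM₁.trans h1
    rw [div_le_iff₀ hs0] at h2
    linarith [mul_comm sr (m:ℝ)]
  have hgap : ∀ m : ℕ, M ≤ m → 2 * d + 1 ≤ (α - sr) * m := by
    intro m hm
    have h1 : (M₂ : ℝ) ≤ m := by exact_mod_cast hMM₂.trans hm
    have h2 : (2 * d + 1) / (α - sr) ≤ (m : ℝ) := hM₂.trans h1
    rw [div_le_iff₀ (by linarith)] at h2
    linarith [mul_comm (α - sr) (m:ℝ)]
  -- extract a cover at scale qq M with small s-sum
  set ε : ℝ≥0∞ := ENNReal.ofReal ((2:ℝ) ^ (-(sr + 1))) with hε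
  have hε0 : 0 < ε := ENNReal.ofReal_pos.mpr (Real.rpow_pos_of_pos two_pos _)
  have hεtop : ε ≠ ∞ := ENNReal.ofReal_ne_top
  have h0 : (⨅ (t : ℕ → Set (EuclideanSpace ℝ (Fin d))) (_ : A ⊆ ⋃ n, t n)
      (_ : ∀ n, EMetric.diam (t n) ≤ qq M),
      ∑' n, ⨆ _ : (t n).Nonempty, EMetric.diam (t n) ^ (sr : ℝ)) = 0 := by
    apply le_antisymm _ zero_le
    rw [← hμH, Measure.hausdorffMeasure_apply]
    exact le_iSup₂ (f := fun (r : ℝ≥0∞) (_ : 0 < r) =>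
      ⨅ (t : ℕ → Set (EuclideanSpace ℝ (Fin d))) (_ : A ⊆ ⋃ n, t n)
        (_ : ∀ n, EMetric.diam (t n) ≤ r),
        ∑' n, ⨆ _ : (t n).Nonempty, EMetric.diam (t n) ^ (sr : ℝ)) (qq M) (qq_pos M)
  have h2' : (⨅ (t : ℕ → Set (EuclideanSpace ℝ (Fin d))) (_ : A ⊆ ⋃ n, t n)
      (_ : ∀ n, EMetric.diam (t n) ≤ qq M),
      ∑' n, ⨆ _ : (t n).Nonempty, EMetric.diam (t n) ^ (sr : ℝ)) < ε := h0 ▸ hε0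
  simp only [iInf_lt_iff] at h2'
  obtain ⟨U, hUcov, hUdiam, hUsum⟩ := h2'
  -- centers
  set y : ℕ → EuclideanSpace ℝ (Fin d) := fun n =>
    if hn : (U n).Nonempty then hn.choose else 0 with hy
  have hyU : ∀ n, (U n).Nonempty → y n ∈ U n := by
    intro n hn
    rw [hy]; simp only [dif_pos hn]; exact hn.choose_spec
  -- scale function
  have hexP : ∀ n, ∃ j, (0 < EMetric.diam (U n) → qq (j + 1) < EMetric.diam (U n)) := by
    intro n
    by_cases hd : 0 < EMetric.diam (U n)
    · obtain ⟨j, hj⟩ := exists_qq_lt hd.ne'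
      exact ⟨j, fun _ => hj⟩
    · exact ⟨0, fun hc => absurd hc hd⟩
  set f : ℕ → ℕ := fun n =>
    if 0 < EMetric.diam (U n) then max M (Nat.find (hexP n)) else M + 1 + n with hf
  have hfM : ∀ n, M ≤ f n := by
    intro n; rw [hf]
    by_cases hd : 0 < EMetric.diam (U n)
    · simp only [if_pos hd]; exact le_max_left _ _
    · simp only [if_neg hd]; omega
  have hfdiam : ∀ n, EMetric.diam (U n) ≤ qq (f n) := by
    intro n; rw [hf]
    by_cases hd : 0 < EMetric.diam (U n)
    · simp only [if_pos hd]
      rcases le_or_gt (Nat.find (hexP n)) M with hle | hlt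
      · rw [max_eq_left hle]; exact hUdiam n
      · rw [max_eq_right hlt.le]
        have hpos : 0 < Nat.find (hexP n) := lt_of_le_of_lt (Nat.zero_le M) hlt
        have := Nat.find_min (hexP n) (Nat.sub_lt hpos one_pos)
        push_neg at this
        obtain ⟨_, h2⟩ := this
        have heq1 : Nat.find (hexP n) - 1 + 1 = Nat.find (hexP n) := by omega
        rwa [heq1] at h2
    · simp only [if_neg hd]
      push_neg at hd
      exact hd.trans zero_le
  have hfspec : ∀ n, 0 < EMetric.diam (U n) → qq (f n + 1) < EMetric.diam (U n) := by
    intro n hd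
    rw [hf]; simp only [if_pos hd]
    calc qq (max M (Nat.find (hexP n)) + 1) ≤ qq (Nat.find (hexP n) + 1) :=
          qq_antitone (by omega)
      _ < EMetric.diam (U n) := Nat.find_spec (hexP n) hd
  -- the index sets at each scale
  set g : ℕ → ℝ≥0∞ := fun n => ⨆ _ : (U n).Nonempty, EMetric.diam (U n) ^ (sr : ℝ) with hg
  have hgsum : ∑' n, g n ≤ ε := hUsum.le
  set c : ℕ → ℝ≥0∞ := fun m => qq (m + 1) ^ (sr : ℝ) with hc
  have hc0 : ∀ m, c m ≠ 0 := by
    intro m; rw [hc]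
    simp only [ne_eq, ENNReal.rpow_eq_zero_iff, not_or]
    constructor
    · rintro ⟨h1, _⟩; exact absurd h1 (qq_pos (m+1)).ne'
    · rintro ⟨h1, _⟩; exact absurd h1 (qq_ne_top (m+1))
  have hc1 : ∀ m, c m ≠ ∞ := by
    intro m; rw [hc]
    exact ENNReal.rpow_ne_top_of_nonneg hs0.le (qq_ne_top (m+1))
  have hFfin : ∀ m, {n | c m ≤ g n}.Finite := fun m =>
    finite_of_le_tsum (hc0 m) (hc1 m) hεtop hgsum
  set T : ℕ → Finset ℕ := fun m => (hFfin m).toFinset ∪ {m - M - 1} with hT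
  have hmemT : ∀ n m, f n = m → (U n).Nonempty → n ∈ T m := by
    intro n m hfn hne
    rw [hT]
    by_cases hd : 0 < EMetric.diam (U n)
    · apply Finset.mem_union_left
      rw [Set.Finite.mem_toFinset]
      show c m ≤ g n
      simp only [hc, hg]
      rw [iSup_pos hne]
      exact ENNReal.rpow_le_rpow (hfn ▸ (hfspec n hd).le) hs0.le
    · apply Finset.mem_union_right
      push_neg at hd
      have hd0 : EMetric.diam (U n) = 0 := le_antisymm hd zero_le
      have : f n = M + 1 + n := by rw [hf]; simp [hd0]
      simp only [Finset.mem_singleton]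
      omega
  set K : ℕ → Finset (Fin d → ℤ) := fun m =>
    (T m).biUnion (fun n => nbrFinset d m (y n)) with hKdef
  set B : ℕ → Set (EuclideanSpace ℝ (Fin d)) := fun m => ⋃ k ∈ K m, dyCube d m k with hB
  have hBmeas : ∀ m, MeasurableSet (B m) := by
    intro m; rw [hB]
    exact (K m).measurableSet_biUnion (fun k _ => measurableSet_dyCube d m k)
  have hUB : ∀ n, (U n).Nonempty → U n ⊆ B (f n) := by
    intro n hn
    have h1 : U n ⊆ ⋃ k ∈ nbrFinset d (f n) (y n), dyCube d (f n) k := by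
      apply subset_biUnion_nbr (f n) (U n) _ (hyU n hn)
      rw [← qq]
      exact hfdiam n
    refine h1.trans ?_
    apply Set.iUnion₂_subset
    intro k hk
    have hkK : k ∈ K (f n) := by
      rw [hKdef]
      exact Finset.mem_biUnion.mpr ⟨n, hmemT n (f n) rfl hn, hk⟩
    exact Set.subset_biUnion_of_mem (u := fun k => dyCube d (f n) k) hkK
  have hAB : A ⊆ ⋃ j : ℕ, B (M + j) := by
    intro x hx
    obtain ⟨_, ⟨n, rfl⟩, hxn⟩ := hUcov hx
    have hne : (U n).Nonempty := ⟨x, hxn⟩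
    refine Set.mem_iUnion.mpr ⟨f n - M, ?_⟩
    rw [Nat.add_sub_cancel' (hfM n)]
    exact hUB n hne hxn
  -- pigeonhole
  have hpig : ∃ m, M ≤ m ∧ ENNReal.ofReal (1 / (m : ℝ) ^ 2) ≤ μ (B m) := by
    by_contra hno
    push_neg at hno
    have h3 : μ A ≤ ∑' j : ℕ, μ (B (M + j)) :=
      (measure_mono hAB).trans (measure_iUnion_le _)
    have h4 : ∑' j : ℕ, μ (B (M + j)) ≤ ∑' j : ℕ, G (j + M) := by
      apply ENNReal.tsum_le_tsum
      intro j
      have := (hno (M + j) (Nat.le_add_right M j)).le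
      rwa [hG, show j + M = M + j by omega]
    have h5 : ∑' j : ℕ, G (j + M) < μ A := hM₃ M hMM₃
    exact lt_irrefl _ ((h3.trans h4).trans_lt h5)
  obtain ⟨m, hmM, hmB⟩ := hpig
  -- apply the hypothesis
  obtain ⟨ν, hνprob, hνcomp, hνent⟩ := hm₀ m (hMm₀.trans hmM) (B m) (hBmeas m) hmB
  -- entropy upper bound
  have hK0 : ∀ k, k ∉ K m → ν (dyCube d m k) = 0 := by
    intro k hk
    apply measure_mono_null _ hνcomp
    intro x hxk
    simp only [Set.mem_compl_iff]
    intro hxB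
    rw [hB] at hxB
    obtain ⟨k', hk', hxk'⟩ := Set.mem_iUnion₂.mp hxB
    rw [mem_dyCube_iff] at hxk hxk'
    exact hk (hxk ▸ hxk' ▸ hk')
  have hent2 : dyEntropy d m ν ≤ Real.logb 2 (K m).card :=
    dyEntropy_le_logb_card d m ν (K m) hK0
  -- cardinality bounds
  have hKcard : (K m).card ≤ ((T m).card) * 3 ^ d := by
    rw [hKdef]
    refine Finset.card_biUnion_le.trans ?_
    calc ∑ n ∈ T m, (nbrFinset d m (y n)).card ≤ ∑ _n ∈ T m, 3 ^ d :=
          Finset.sum_le_sum (fun n _ => card_nbrFinset_le d m (y n))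
      _ = (T m).card * 3 ^ d := by rw [Finset.sum_const, smul_eq_mul]
  have hTcard : (T m).card ≤ (hFfin m).toFinset.card + 1 := by
    rw [hT]
    exact Finset.card_union_le _ _ |>.trans (by simp)
  have hFcard : ((hFfin m).toFinset.card : ℝ≥0∞) * c m ≤ ε :=
    card_mul_le_of_le_tsum hgsum _ (fun n hn => ((hFfin m).mem_toFinset.mp hn))
  -- convert to a real bound
  set F : ℝ := ((hFfin m).toFinset.card : ℝ) with hFdef
  have hF0 : 0 ≤ F := Nat.cast_nonneg _
  have hcm : c m = ENNReal.ofReal ((2:ℝ) ^ (-(sr * ((m:ℝ) + 1)))) := by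
    simp only [hc]
    rw [show qq (m+1) = ENNReal.ofReal ((2 ^ (m+1) : ℝ))⁻¹ from rfl,
      ENNReal.ofReal_rpow_of_pos (by positivity)]
    congr 1
    rw [← Real.rpow_natCast 2 (m+1), ← Real.rpow_neg (by norm_num : (0:ℝ) ≤ 2),
      ← Real.rpow_mul (by norm_num : (0:ℝ) ≤ 2)]
    congr 1
    push_cast
    ring
  have hFreal : F * (2:ℝ) ^ (-(sr * ((m:ℝ) + 1))) ≤ (2:ℝ) ^ (-(sr + 1)) := by
    have h6 : ENNReal.ofReal (F * (2:ℝ) ^ (-(sr * ((m:ℝ) + 1)))) ≤ ε := by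
      rw [ENNReal.ofReal_mul hF0, ← hcm, hFdef, ENNReal.ofReal_natCast]
      exact hFcard
    rw [hε] at h6
    exact (ENNReal.ofReal_le_ofReal_iff (Real.rpow_pos_of_pos two_pos _).le).mp h6
  have hFbound : F ≤ (2:ℝ) ^ (sr * m) / 2 := by
    have h8 : (0:ℝ) < (2:ℝ) ^ (-(sr * ((m:ℝ) + 1))) := Real.rpow_pos_of_pos two_pos _
    calc F ≤ (2:ℝ) ^ (-(sr + 1)) / (2:ℝ) ^ (-(sr * ((m:ℝ) + 1))) := by
          rw [le_div_iff₀ h8]; exact hFreal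
      _ = (2:ℝ) ^ (sr * m - 1) := by
          rw [← Real.rpow_sub two_pos]; congr 1; ring
      _ = (2:ℝ) ^ (sr * m) / 2 := by rw [Real.rpow_sub two_pos, Real.rpow_one]
  -- K m is nonempty since the entropy is positive
  have hm1 : (1:ℝ) ≤ m := by exact_mod_cast hM1.trans hmM
  have hαm : 0 < α * m := mul_pos hα0 (by linarith)
  have hKpos : 0 < (K m).card := by
    rcases Nat.eq_zero_or_pos (K m).card with h | h
    · exfalso
      rw [h] at hent2
      norm_num at hent2
      exact absurd (hνent.trans hent2) (not_le.mpr hαm)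
    · exact h
  -- final numeric contradiction
  have h2sm : (2:ℝ) ≤ (2:ℝ) ^ (sr * m) := by
    calc (2:ℝ) = (2:ℝ) ^ (1:ℝ) := (Real.rpow_one 2).symm
      _ ≤ (2:ℝ) ^ (sr * m) := Real.rpow_le_rpow_left_iff one_lt_two |>.mpr (hsm1 m hmM)
  have hcard_le : ((K m).card : ℝ) ≤ (2:ℝ) ^ (sr * m + 2 * d) := by
    have h9 : ((K m).card : ℝ) ≤ (F + 1) * 3 ^ d := by
      have : ((K m).card : ℝ) ≤ (((hFfin m).toFinset.card + 1) * 3 ^ d : ℕ) := by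
        exact_mod_cast hKcard.trans (Nat.mul_le_mul_right _ hTcard)
      push_cast at this
      linarith
    have h10 : F + 1 ≤ (2:ℝ) ^ (sr * m) := by
      have : (1:ℝ) ≤ (2:ℝ) ^ (sr * m) / 2 := by linarith
      linarith [hFbound]
    have h11 : (3:ℝ) ^ d ≤ (2:ℝ) ^ ((2 * d : ℕ) : ℝ) := by
      rw [Real.rpow_natCast]
      calc (3:ℝ) ^ d ≤ (4:ℝ) ^ d := pow_le_pow_left₀ (by norm_num) (by norm_num) d
        _ = (2:ℝ) ^ (2 * d) := by rw [pow_mul]; norm_num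
    calc ((K m).card : ℝ) ≤ (F + 1) * 3 ^ d := h9
      _ ≤ (2:ℝ) ^ (sr * m) * (2:ℝ) ^ ((2 * d : ℕ) : ℝ) := by
          apply mul_le_mul h10 h11 (by positivity) (by positivity)
      _ = (2:ℝ) ^ (sr * m + 2 * d) := by
          rw [← Real.rpow_add two_pos]
          norm_num
  have hlogb : Real.logb 2 ((K m).card) ≤ sr * m + 2 * d := by
    calc Real.logb 2 ((K m).card) ≤ Real.logb 2 ((2:ℝ) ^ (sr * m + 2 * d)) := by
          apply Real.logb_le_logb_of_le one_lt_two (by exact_mod_cast hKpos) hcard_le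
      _ = sr * m + 2 * d := Real.logb_rpow (by norm_num) (by norm_num)
  have hfinal : α * m ≤ sr * m + 2 * d := hνent.trans (hent2.trans hlogb)
  have hcontra : 2 * d + 1 ≤ (α - sr) * m := hgap m hmM
  nlinarith [hcontra, hfinal]
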